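/- Let p ≥ 2 and consider a directed tree on V = {0,…,p−1} with root 0 and a single self-loop at the root, with associated third-order model Θ and cumulants S, T. Then: (1) for every i ∈ V, one has [for every j ∈ V and every θ ∈ Θ: S_{ij}³·T_{iii}² − S_{ii}³·T_{iij}·T_{ijj} = 0] if and only if i = 0; (2) for all i, j ∈ V, one has [for every θ ∈ Θ: S_{0i}·T_{00j} − S_{0j}·T_{00i} = 0] if and only if level(i) = level(j); (3) for all i, j ∈ V with level(i) ≠ level(j), one has [for every θ ∈ Θ: S_{ij}·T_{00j} − S_{0j}·T_{0ij} = 0] if and only if level(j) > level(i). -/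

import Mathlib

open Matrix

/-- The order-`n` steady-state cumulant tensor. -/
noncomputable def steadyCumulant (p n : ℕ) (A : Matrix (Fin p) (Fin p) ℝ)
    (w : Fin p → ℝ) (i : Fin n → Fin p) : ℝ :=
  ∑' l : ℕ, ∑ r : Fin p, w r * ∏ m : Fin n, (A ^ l) (i m) r

/-- `(u,v)` is an edge of the directed tree with parent function `par`, root `r`,
and a single self-loop at the root: `u → v` with `u = par v` for `v ≠ r`, plus the
self-loop `r → r`. -/
def treeEdge {p : ℕ} (par : Fin p → Fin p) (r u v : Fin p) : Prop :=
  (v ≠ r ∧ u = par v) ∨ (u = r ∧ v = r)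

/-- Membership in the third-order model parameter space `Θ` of the directed tree:
`A` is supported on the tree edges and Schur stable, `w₂` is entrywise positive
and `w₃` entrywise nonzero. -/
def treeModel {p : ℕ} (par : Fin p → Fin p) (r : Fin p)
    (A : Matrix (Fin p) (Fin p) ℝ) (w₂ w₃ : Fin p → ℝ) : Prop :=
  (∀ u v : Fin p, ¬treeEdge par r u v → A v u = 0) ∧
  (∀ μ ∈ spectrum ℂ (A.map (algebraMap ℝ ℂ)), ‖μ‖ < 1) ∧
  (∀ i : Fin p, 0 < w₂ i) ∧ (∀ i : Fin p, w₃ i ≠ 0)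

set_option linter.unusedSectionVars false

namespace Stmt12Aux

lemma tsum_shift_geom {L : ℕ} {C q : ℝ} (hq : |q| < 1) {f : ℕ → ℝ}
    (h0 : ∀ l, l < L → f l = 0) (hf : ∀ m, f (L + m) = C * q ^ m) :
    ∑' l, f l = C / (1 - q) := by
  have hqn : ‖q‖ < 1 := by rwa [Real.norm_eq_abs]
  have hgeom : Summable fun m : ℕ => C * q ^ m :=
    (summable_geometric_of_norm_lt_one hqn).mul_left C
  have h1 : Summable fun m => f (m + L) :=
    hgeom.congr fun m => by rw [add_comm m L, hf]
  have hs : Summable f := (summable_nat_add_iff L).mp h1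
  have h2 := Summable.sum_add_tsum_nat_add L hs
  have h3 : ∑' m, f (m + L) = ∑' m : ℕ, C * q ^ m :=
    tsum_congr fun m => by rw [add_comm m L, hf]
  rw [← h2, Finset.sum_eq_zero (fun i hi => h0 i (Finset.mem_range.mp hi)), zero_add, h3,
    tsum_mul_left, tsum_geometric_of_norm_lt_one hqn, div_eq_mul_inv]


variable {p : ℕ} {par : Fin p → Fin p} {r : Fin p}

section Level

variable (hroot : par r = r) (hreach : ∀ i : Fin p, ∃ n : ℕ, par^[n] i = r)
include hroot hreach

lemma iterate_root (n : ℕ) : par^[n] r = r := Function.iterate_fixed hroot n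

lemma level_le_iff {i : Fin p} {l : ℕ} :
    par^[l] i = r ↔ Nat.find (hreach i) ≤ l := by
  constructor
  · intro h; exact Nat.find_min' (hreach i) h
  · intro h
    have h1 : par^[(l - Nat.find (hreach i)) + Nat.find (hreach i)] i = r := by
      rw [Function.iterate_add_apply, Nat.find_spec (hreach i), iterate_root hroot hreach]
    rwa [Nat.sub_add_cancel h] at h1

lemma level_root : Nat.find (hreach r) = 0 :=
  Nat.le_zero.mp (Nat.find_min' (hreach r) rfl)

lemma level_eq_zero {i : Fin p} (h : Nat.find (hreach i) = 0) : i = r := by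
  have := Nat.find_spec (hreach i)
  rwa [h] at this

lemma level_iterate {i : Fin p} {l : ℕ} (h : l ≤ Nat.find (hreach i)) :
    Nat.find (hreach (par^[l] i)) = Nat.find (hreach i) - l := by
  refine le_antisymm ?_ ?_
  · apply Nat.find_min'
    rw [← Function.iterate_add_apply, Nat.sub_add_cancel h, Nat.find_spec (hreach i)]
  · have h1 : par^[Nat.find (hreach (par^[l] i)) + l] i = r := by
      rw [Function.iterate_add_apply, Nat.find_spec (hreach (par^[l] i))]
    have h2 := (level_le_iff hroot hreach).mp h1
    omega

lemma level_lt (i : Fin p) : Nat.find (hreach i) < p := by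
  have hinj : Function.Injective
      (fun k : Fin (Nat.find (hreach i) + 1) => par^[(k : ℕ)] i) := by
    intro k₁ k₂ hk
    have e1 := level_iterate hroot hreach (i := i) (l := (k₁ : ℕ)) (by omega)
    have e2 := level_iterate hroot hreach (i := i) (l := (k₂ : ℕ)) (by omega)
    simp only at hk
    rw [hk, e2] at e1
    have hk1 : (k₁ : ℕ) < Nat.find (hreach i) + 1 := k₁.2
    have hk2 : (k₂ : ℕ) < Nat.find (hreach i) + 1 := k₂.2
    exact Fin.ext (by omega)
  have h2 : Nat.find (hreach i) + 1 ≤ p := by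
    simpa using Fintype.card_le_of_injective _ hinj
  omega

end Level

section Mat

variable (hroot : par r = r) (hreach : ∀ i : Fin p, ∃ n : ℕ, par^[n] i = r)
variable {A : Matrix (Fin p) (Fin p) ℝ}
variable (hA : ∀ u v : Fin p, ¬treeEdge par r u v → A v u = 0)
include hroot hreach hA

lemma mul_apply_root (M : Matrix (Fin p) (Fin p) ℝ) (u : Fin p) :
    (A * M) r u = A r r * M r u := by
  rw [Matrix.mul_apply]
  apply Finset.sum_eq_single
  · intro k _ hk
    rw [hA k r (fun hc => by
      rcases hc with ⟨h1, _⟩ | ⟨h1, _⟩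
      · exact h1 rfl
      · exact hk h1), zero_mul]
  · intro h; exact absurd (Finset.mem_univ r) h

lemma mul_apply_child (M : Matrix (Fin p) (Fin p) ℝ) {j : Fin p} (hj : j ≠ r) (u : Fin p) :
    (A * M) j u = A j (par j) * M (par j) u := by
  rw [Matrix.mul_apply]
  apply Finset.sum_eq_single
  · intro k _ hk
    rw [hA k j (fun hc => by
      rcases hc with ⟨_, h2⟩ | ⟨_, h2⟩
      · exact hk h2
      · exact hj h2), zero_mul]
  · intro h; exact absurd (Finset.mem_univ _) h

lemma pow_root (l : ℕ) (u : Fin p) :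
    (A ^ l) r u = if u = r then (A r r) ^ l else 0 := by
  induction l with
  | zero =>
    simp [Matrix.one_apply, eq_comm]
  | succ n ih =>
    rw [pow_succ', mul_apply_root hroot hreach hA, ih]
    by_cases hu : u = r <;> simp [hu, pow_succ, mul_comm]

lemma pow_apply_ne : ∀ {l : ℕ} {j u : Fin p}, u ≠ par^[l] j → (A ^ l) j u = 0 := by
  intro l
  induction l with
  | zero =>
    intro j u hu
    simp only [Function.iterate_zero, id_eq] at hu
    simp [Matrix.one_apply, (Ne.symm hu)]
  | succ n ih =>
    intro j u hu
    by_cases hj : j = r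
    · subst hj
      rw [pow_root hroot hreach hA, if_neg]
      rwa [iterate_root hroot hreach] at hu
    · rw [pow_succ', mul_apply_child hroot hreach hA _ hj, ih, mul_zero]
      rwa [Function.iterate_succ_apply] at hu

lemma pow_step : ∀ (n : ℕ) (j : Fin p), Nat.find (hreach j) = n →
    ∀ l, n ≤ l → (A ^ (l + 1)) j r = A r r * (A ^ l) j r := by
  intro n
  induction n with
  | zero =>
    intro j hn l _
    have hj : j = r := level_eq_zero hroot hreach hn
    subst hj
    rw [pow_root hroot hreach hA, pow_root hroot hreach hA, if_pos rfl, if_pos rfl, pow_succ,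
      mul_comm]
  | succ n ih =>
    intro j hn l hl
    have hj : j ≠ r := by
      intro h; subst h; rw [level_root hroot hreach] at hn; omega
    obtain ⟨l', rfl⟩ : ∃ l', l = l' + 1 := ⟨l - 1, by omega⟩
    have hpar : Nat.find (hreach (par j)) = n := by
      have h1 := level_iterate hroot hreach (i := j) (l := 1) (by omega)
      simp only [Function.iterate_one] at h1
      omega
    rw [pow_succ', mul_apply_child hroot hreach hA _ hj, ih (par j) hpar l' (by omega),
      pow_succ' A l', mul_apply_child hroot hreach hA _ hj]
    ring

lemma pow_col {j : Fin p} {l : ℕ} (h : Nat.find (hreach j) ≤ l) :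
    (A ^ l) j r
      = (A r r) ^ (l - Nat.find (hreach j)) * (A ^ (Nat.find (hreach j))) j r := by
  obtain ⟨m, rfl⟩ : ∃ m, l = Nat.find (hreach j) + m := ⟨l - Nat.find (hreach j), by omega⟩
  rw [Nat.add_sub_cancel_left]
  clear h
  induction m with
  | zero => simp
  | succ n ih =>
    rw [show Nat.find (hreach j) + (n + 1) = (Nat.find (hreach j) + n) + 1 by omega,
      pow_step hroot hreach hA _ j rfl _ (by omega), ih, pow_succ, mul_comm (A r r),
      mul_assoc]
    ring

lemma pow_col_ite (j : Fin p) (l : ℕ) :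
    (A ^ l) j r = if Nat.find (hreach j) ≤ l then
      (A r r) ^ (l - Nat.find (hreach j)) * (A ^ (Nat.find (hreach j))) j r else 0 := by
  split_ifs with h
  · exact pow_col hroot hreach hA h
  · apply pow_apply_ne hroot hreach hA
    intro hc
    exact h ((level_le_iff hroot hreach).mp hc.symm)

lemma root_entry_lt_one
    (hs : ∀ μ ∈ spectrum ℂ (A.map (algebraMap ℝ ℂ)), ‖μ‖ < 1) : |A r r| < 1 := by
  have hmem : (algebraMap ℝ ℂ (A r r)) ∈ spectrum ℂ (A.map (algebraMap ℝ ℂ)) := by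
    rw [spectrum.mem_iff]
    intro hunit
    have hdet := (Matrix.isUnit_iff_isUnit_det _).mp hunit
    rw [Matrix.det_eq_zero_of_row_eq_zero r ?_] at hdet
    · simp at hdet
    · intro u
      by_cases hu : u = r
      · subst hu
        simp [Matrix.algebraMap_eq_diagonal, Matrix.diagonal_apply, Matrix.map_apply]
      · have h0 : A r u = 0 := by
          apply hA
          intro hc
          rcases hc with ⟨h1, _⟩ | ⟨h1, _⟩
          · exact h1 rfl
          · exact hu h1
        have hu' : r ≠ u := Ne.symm hu
        simp [Matrix.algebraMap_eq_diagonal, Matrix.diagonal_apply, Matrix.map_apply, hu', h0]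
  have := hs _ hmem
  simpa using this

end Mat

end Stmt12Aux

namespace Stmt12Aux

section Cum

variable {p : ℕ} {par : Fin p → Fin p} {r : Fin p}
variable (hroot : par r = r) (hreach : ∀ i : Fin p, ∃ n : ℕ, par^[n] i = r)
variable {A : Matrix (Fin p) (Fin p) ℝ}
variable (hA : ∀ u v : Fin p, ¬treeEdge par r u v → A v u = 0)
variable (ha : |A r r| < 1)
include hroot hreach hA ha

lemma cum_S0 (w : Fin p → ℝ) (j : Fin p) :
    steadyCumulant p 2 A w ![r, j]
      = w r * (A ^ (Nat.find (hreach j))) j r * (A r r) ^ (Nat.find (hreach j))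
        / (1 - (A r r) ^ 2) := by
  unfold steadyCumulant
  apply tsum_shift_geom (L := Nat.find (hreach j)) (q := (A r r) ^ 2)
  · rw [abs_pow]; exact pow_lt_one₀ (abs_nonneg _) ha two_ne_zero
  · intro l hl
    simp only [Fin.prod_univ_two, Matrix.cons_val_zero, Matrix.cons_val_one, Matrix.head_cons]
    apply Finset.sum_eq_zero
    intro u _
    by_cases hu : u = r
    · have h1 : (A ^ l) j u = 0 := by
        apply pow_apply_ne hroot hreach hA
        intro hc
        rw [hu] at hc
        exact absurd ((level_le_iff hroot hreach).mp hc.symm) (by omega)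
      rw [h1]; ring
    · rw [pow_root hroot hreach hA, if_neg hu]; ring
  · intro m
    simp only [Fin.prod_univ_two, Matrix.cons_val_zero, Matrix.cons_val_one, Matrix.head_cons]
    rw [Finset.sum_eq_single r
      (fun u _ hu => by rw [pow_root hroot hreach hA, if_neg hu]; ring)
      (fun h => absurd (Finset.mem_univ r) h),
      pow_root hroot hreach hA, if_pos rfl, pow_col hroot hreach hA (by omega),
      Nat.add_sub_cancel_left]
    ring

lemma cum_T00 (w : Fin p → ℝ) (j : Fin p) :
    steadyCumulant p 3 A w ![r, r, j]
      = w r * (A ^ (Nat.find (hreach j))) j r * (A r r) ^ (2 * Nat.find (hreach j))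
        / (1 - (A r r) ^ 3) := by
  unfold steadyCumulant
  apply tsum_shift_geom (L := Nat.find (hreach j)) (q := (A r r) ^ 3)
  · rw [abs_pow]; exact pow_lt_one₀ (abs_nonneg _) ha three_ne_zero
  · intro l hl
    simp only [Fin.prod_univ_three, Matrix.cons_val_zero, Matrix.cons_val_one, Matrix.head_cons,
      Matrix.cons_val_two, Matrix.tail_cons]
    apply Finset.sum_eq_zero
    intro u _
    by_cases hu : u = r
    · have h1 : (A ^ l) j u = 0 := by
        apply pow_apply_ne hroot hreach hA
        intro hc
        rw [hu] at hc
        exact absurd ((level_le_iff hroot hreach).mp hc.symm) (by omega)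
      rw [h1]; ring
    · rw [pow_root hroot hreach hA, if_neg hu]; ring
  · intro m
    simp only [Fin.prod_univ_three, Matrix.cons_val_zero, Matrix.cons_val_one, Matrix.head_cons,
      Matrix.cons_val_two, Matrix.tail_cons]
    rw [Finset.sum_eq_single r
      (fun u _ hu => by rw [pow_root hroot hreach hA, if_neg hu]; ring)
      (fun h => absurd (Finset.mem_univ r) h),
      pow_root hroot hreach hA, if_pos rfl, pow_col hroot hreach hA (by omega),
      Nat.add_sub_cancel_left]
    ring

lemma cum_T0jj (w : Fin p → ℝ) (j : Fin p) :
    steadyCumulant p 3 A w ![r, j, j]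
      = w r * ((A ^ (Nat.find (hreach j))) j r) ^ 2 * (A r r) ^ (Nat.find (hreach j))
        / (1 - (A r r) ^ 3) := by
  unfold steadyCumulant
  apply tsum_shift_geom (L := Nat.find (hreach j)) (q := (A r r) ^ 3)
  · rw [abs_pow]; exact pow_lt_one₀ (abs_nonneg _) ha three_ne_zero
  · intro l hl
    simp only [Fin.prod_univ_three, Matrix.cons_val_zero, Matrix.cons_val_one, Matrix.head_cons,
      Matrix.cons_val_two, Matrix.tail_cons]
    apply Finset.sum_eq_zero
    intro u _
    by_cases hu : u = r
    · have h1 : (A ^ l) j u = 0 := by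
        apply pow_apply_ne hroot hreach hA
        intro hc
        rw [hu] at hc
        exact absurd ((level_le_iff hroot hreach).mp hc.symm) (by omega)
      rw [h1]; ring
    · rw [pow_root hroot hreach hA, if_neg hu]; ring
  · intro m
    simp only [Fin.prod_univ_three, Matrix.cons_val_zero, Matrix.cons_val_one, Matrix.head_cons,
      Matrix.cons_val_two, Matrix.tail_cons]
    rw [Finset.sum_eq_single r
      (fun u _ hu => by rw [pow_root hroot hreach hA, if_neg hu]; ring)
      (fun h => absurd (Finset.mem_univ r) h),
      pow_root hroot hreach hA, if_pos rfl, pow_col hroot hreach hA (by omega),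
      Nat.add_sub_cancel_left]
    ring

lemma cum_T0ij (w : Fin p → ℝ) {i j : Fin p} (hij : Nat.find (hreach i) ≤ Nat.find (hreach j)) :
    steadyCumulant p 3 A w ![r, i, j]
      = w r * (A ^ (Nat.find (hreach i))) i r * (A ^ (Nat.find (hreach j))) j r
          * (A r r) ^ (2 * Nat.find (hreach j) - Nat.find (hreach i))
        / (1 - (A r r) ^ 3) := by
  unfold steadyCumulant
  apply tsum_shift_geom (L := Nat.find (hreach j)) (q := (A r r) ^ 3)
  · rw [abs_pow]; exact pow_lt_one₀ (abs_nonneg _) ha three_ne_zero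
  · intro l hl
    simp only [Fin.prod_univ_three, Matrix.cons_val_zero, Matrix.cons_val_one, Matrix.head_cons,
      Matrix.cons_val_two, Matrix.tail_cons]
    apply Finset.sum_eq_zero
    intro u _
    by_cases hu : u = r
    · have h1 : (A ^ l) j u = 0 := by
        apply pow_apply_ne hroot hreach hA
        intro hc
        rw [hu] at hc
        exact absurd ((level_le_iff hroot hreach).mp hc.symm) (by omega)
      rw [h1]; ring
    · rw [pow_root hroot hreach hA, if_neg hu]; ring
  · intro m
    simp only [Fin.prod_univ_three, Matrix.cons_val_zero, Matrix.cons_val_one, Matrix.head_cons,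
      Matrix.cons_val_two, Matrix.tail_cons]
    rw [Finset.sum_eq_single r
      (fun u _ hu => by rw [pow_root hroot hreach hA, if_neg hu]; ring)
      (fun h => absurd (Finset.mem_univ r) h),
      pow_root hroot hreach hA, if_pos rfl, pow_col hroot hreach hA (j := j) (by omega),
      Nat.add_sub_cancel_left, pow_col hroot hreach hA (j := i) (by omega),
      show Nat.find (hreach j) + m - Nat.find (hreach i)
        = (Nat.find (hreach j) - Nat.find (hreach i)) + m from by omega,
      show 2 * Nat.find (hreach j) - Nat.find (hreach i)
        = Nat.find (hreach j) + (Nat.find (hreach j) - Nat.find (hreach i)) from by omega]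
    ring

lemma cum_Sij (w : Fin p → ℝ) {i j : Fin p} (hij : Nat.find (hreach i) < Nat.find (hreach j)) :
    steadyCumulant p 2 A w ![i, j]
      = w r * (A ^ (Nat.find (hreach i))) i r * (A ^ (Nat.find (hreach j))) j r
          * (A r r) ^ (Nat.find (hreach j) - Nat.find (hreach i))
        / (1 - (A r r) ^ 2) := by
  unfold steadyCumulant
  apply tsum_shift_geom (L := Nat.find (hreach j)) (q := (A r r) ^ 2)
  · rw [abs_pow]; exact pow_lt_one₀ (abs_nonneg _) ha two_ne_zero
  · intro l hl
    simp only [Fin.prod_univ_two, Matrix.cons_val_zero, Matrix.cons_val_one, Matrix.head_cons]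
    apply Finset.sum_eq_zero
    intro u _
    by_cases hu : u = par^[l] j
    · have h1 : (A ^ l) i u = 0 := by
        apply pow_apply_ne hroot hreach hA
        intro hc
        by_cases hli : l ≤ Nat.find (hreach i)
        · have e1 := level_iterate hroot hreach (i := i) (l := l) hli
          have e2 := level_iterate hroot hreach (i := j) (l := l) (by omega)
          rw [← hc, hu] at e1
          omega
        · have hir : par^[l] i = r := (level_le_iff hroot hreach).mpr (by omega)
          have hjr : par^[l] j ≠ r := by
            intro hc2
            exact absurd ((level_le_iff hroot hreach).mp hc2) (by omega)
          rw [← hu, hc, hir] at hjr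
          exact hjr rfl
      rw [h1]; ring
    · rw [pow_apply_ne hroot hreach hA hu]; ring
  · intro m
    simp only [Fin.prod_univ_two, Matrix.cons_val_zero, Matrix.cons_val_one, Matrix.head_cons]
    have hjr : par^[Nat.find (hreach j) + m] j = r :=
      (level_le_iff hroot hreach).mpr (by omega)
    rw [Finset.sum_eq_single r
      (fun u _ hu => by
        rw [pow_apply_ne hroot hreach hA (j := j) (by rw [hjr]; exact hu)]; ring)
      (fun h => absurd (Finset.mem_univ r) h),
      pow_col hroot hreach hA (j := j) (by omega), Nat.add_sub_cancel_left,
      pow_col hroot hreach hA (j := i) (by omega),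
      show Nat.find (hreach j) + m - Nat.find (hreach i)
        = (Nat.find (hreach j) - Nat.find (hreach i)) + m from by omega]
    ring

end Cum

end Stmt12Aux

namespace Stmt12Aux

section Perm

variable {p : ℕ}

lemma cum2_swap (A : Matrix (Fin p) (Fin p) ℝ) (w : Fin p → ℝ) (i j : Fin p) :
    steadyCumulant p 2 A w ![i, j] = steadyCumulant p 2 A w ![j, i] := by
  unfold steadyCumulant
  refine tsum_congr fun l => Finset.sum_congr rfl fun u _ => ?_
  simp only [Fin.prod_univ_two, Matrix.cons_val_zero, Matrix.cons_val_one, Matrix.head_cons]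
  ring

lemma cum3_rot (A : Matrix (Fin p) (Fin p) ℝ) (w : Fin p → ℝ) (i j k : Fin p) :
    steadyCumulant p 3 A w ![i, j, k] = steadyCumulant p 3 A w ![k, i, j] := by
  unfold steadyCumulant
  refine tsum_congr fun l => Finset.sum_congr rfl fun u _ => ?_
  simp only [Fin.prod_univ_three, Matrix.cons_val_zero, Matrix.cons_val_one, Matrix.head_cons,
    Matrix.cons_val_two, Matrix.tail_cons]
  ring

lemma cum3_swap23 (A : Matrix (Fin p) (Fin p) ℝ) (w : Fin p → ℝ) (i j k : Fin p) :
    steadyCumulant p 3 A w ![i, j, k] = steadyCumulant p 3 A w ![i, k, j] := by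
  unfold steadyCumulant
  refine tsum_congr fun l => Finset.sum_congr rfl fun u _ => ?_
  simp only [Fin.prod_univ_three, Matrix.cons_val_zero, Matrix.cons_val_one, Matrix.head_cons,
    Matrix.cons_val_two, Matrix.tail_cons]
  ring

end Perm

instance decTreeEdge {p : ℕ} (par : Fin p → Fin p) (r u v : Fin p) :
    Decidable (treeEdge par r u v) := by
  unfold treeEdge; exact inferInstance

/-- The witness matrix: every tree edge gets weight `1/2`. -/
noncomputable def Wmat {p : ℕ} (par : Fin p → Fin p) (r : Fin p) : Matrix (Fin p) (Fin p) ℝ :=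
  Matrix.of fun v u => if treeEdge par r u v then (2⁻¹ : ℝ) else 0

section Witness

variable {p : ℕ} {par : Fin p → Fin p} {r : Fin p}

lemma W_supp : ∀ u v : Fin p, ¬treeEdge par r u v → Wmat par r v u = 0 :=
  fun _ _ h => if_neg h

lemma W_root : Wmat par r r r = 2⁻¹ := if_pos (Or.inr ⟨rfl, rfl⟩)

lemma W_edge {j : Fin p} (hj : j ≠ r) : Wmat par r j (par j) = 2⁻¹ :=
  if_pos (Or.inl ⟨hj, rfl⟩)

variable (hroot : par r = r) (hreach : ∀ i : Fin p, ∃ n : ℕ, par^[n] i = r)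
include hroot hreach

lemma W_pow_diag : ∀ (l : ℕ) (j : Fin p),
    ((Wmat par r) ^ l) j (par^[l] j) = (2⁻¹ : ℝ) ^ l := by
  intro l
  induction l with
  | zero => intro j; simp
  | succ n ih =>
    intro j
    by_cases hj : j = r
    · rw [hj, iterate_root hroot hreach, pow_succ',
        mul_apply_root hroot hreach W_supp, W_root]
      have h1 := ih r
      rw [iterate_root hroot hreach] at h1
      rw [h1]; ring
    · rw [Function.iterate_succ_apply, pow_succ',
        mul_apply_child hroot hreach W_supp _ hj, W_edge hj, ih (par j)]
      ring

lemma W_col (j : Fin p) :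
    ((Wmat par r) ^ (Nat.find (hreach j))) j r = (2⁻¹ : ℝ) ^ (Nat.find (hreach j)) := by
  have h1 := W_pow_diag hroot hreach (Nat.find (hreach j)) j
  rwa [Nat.find_spec (hreach j)] at h1

lemma W_pow_p (j u : Fin p) :
    ((Wmat par r) ^ p) j u = if u = r then (2⁻¹ : ℝ) ^ p else 0 := by
  split_ifs with hu
  · subst hu
    rw [pow_col hroot hreach W_supp (le_of_lt (level_lt hroot hreach j)),
      W_col hroot hreach, W_root, ← pow_add,
      Nat.sub_add_cancel (le_of_lt (level_lt hroot hreach j))]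
  · apply pow_apply_ne hroot hreach W_supp
    intro hc
    rw [(level_le_iff hroot hreach).mpr (le_of_lt (level_lt hroot hreach j))] at hc
    exact hu hc

lemma W_spec : ∀ μ ∈ spectrum ℂ ((Wmat par r).map (algebraMap ℝ ℂ)), ‖μ‖ < 1 := by
  intro μ hμ
  rw [spectrum.mem_iff] at hμ
  set B := (Wmat par r).map (algebraMap ℝ ℂ) with hB
  have hdet : (algebraMap ℂ (Matrix (Fin p) (Fin p) ℂ) μ - B).det = 0 := by
    by_contra h
    exact hμ ((Matrix.isUnit_iff_isUnit_det _).mpr (isUnit_iff_ne_zero.mpr h))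
  obtain ⟨v, hv0, hvec⟩ := Matrix.exists_mulVec_eq_zero_iff.mpr hdet
  have hBv : B *ᵥ v = μ • v := by
    have h1 : (algebraMap ℂ (Matrix (Fin p) (Fin p) ℂ) μ) *ᵥ v - B *ᵥ v = 0 := by
      rw [← Matrix.sub_mulVec, hvec]
    have h2 : (algebraMap ℂ (Matrix (Fin p) (Fin p) ℂ) μ) *ᵥ v = μ • v := by
      rw [Algebra.algebraMap_eq_smul_one, Matrix.smul_mulVec, Matrix.one_mulVec]
    rw [h2] at h1
    exact (sub_eq_zero.mp h1).symm
  have hpow : ∀ n : ℕ, (B ^ n) *ᵥ v = μ ^ n • v := by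
    intro n
    induction n with
    | zero => simp [Matrix.one_mulVec]
    | succ n ih =>
      rw [pow_succ', ← Matrix.mulVec_mulVec, ih, Matrix.mulVec_smul, hBv, smul_smul, pow_succ]
  have hBp : ∀ j u : Fin p, (B ^ p) j u = if u = r then ((2⁻¹ : ℝ) : ℂ) ^ p else 0 := by
    intro j u
    have h1 : B ^ p = ((Wmat par r) ^ p).map (algebraMap ℝ ℂ) := by
      rw [hB, ← RingHom.mapMatrix_apply, ← map_pow, RingHom.mapMatrix_apply]
    rw [h1, Matrix.map_apply, W_pow_p hroot hreach]
    split_ifs <;> simp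
  have hcoord : ∀ k : Fin p, ((2⁻¹ : ℝ) : ℂ) ^ p * v r = μ ^ p * v k := by
    intro k
    have h1 := congrFun (hpow p) k
    rw [Matrix.mulVec, dotProduct] at h1
    rw [Finset.sum_eq_single r (fun u _ hu => by rw [hBp, if_neg hu, zero_mul])
      (fun h => absurd (Finset.mem_univ r) h), hBp, if_pos rfl] at h1
    simpa [Pi.smul_apply, smul_eq_mul] using h1
  by_cases hvr : v r = 0
  · have hzero : ∀ k, μ ^ p * v k = 0 := fun k => by rw [← hcoord k, hvr, mul_zero]
    obtain ⟨k, hk⟩ := Function.ne_iff.mp hv0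
    have : μ ^ p = 0 := by
      rcases mul_eq_zero.mp (hzero k) with h | h
      · exact h
      · exact absurd h hk
    have : μ = 0 := pow_eq_zero_iff (by omega : p ≠ 0) |>.mp this
    simp [this]
  · have h1 := hcoord r
    have h2 : μ ^ p = ((2⁻¹ : ℝ) : ℂ) ^ p := (mul_right_cancel₀ hvr h1).symm
    have h3 : ‖μ‖ ^ p = (2⁻¹ : ℝ) ^ p := by
      rw [← norm_pow, h2, norm_pow, Complex.norm_real, Real.norm_eq_abs,
        abs_of_pos (by norm_num : (0:ℝ) < 2⁻¹)]
    have h4 : ‖μ‖ = 2⁻¹ := by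
      have hp0 : p ≠ 0 := by
        have : 0 < p := Fin.pos r
        omega
      exact (pow_left_inj₀ (norm_nonneg _) (by norm_num) hp0).mp h3
    rw [h4]; norm_num

lemma iter_ne_self {j : Fin p} (hj : j ≠ r) {l : ℕ} (hl : l ≠ 0) : par^[l] j ≠ j := by
  intro hc
  by_cases hli : l ≤ Nat.find (hreach j)
  · have h1 := level_iterate hroot hreach (i := j) hli
    rw [hc] at h1
    have hj0 : Nat.find (hreach j) ≠ 0 := fun h => hj (level_eq_zero hroot hreach h)
    omega
  · have hr2 : par^[l] j = r := (level_le_iff hroot hreach).mpr (by omega)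
    rw [hc] at hr2
    exact hj hr2

lemma cum_Sii_W (i : Fin p) :
    steadyCumulant p 2 (Wmat par r) (fun _ => 1) ![i, i] = 1 / (1 - (2⁻¹ : ℝ) ^ 2) := by
  unfold steadyCumulant
  apply tsum_shift_geom (L := 0) (q := (2⁻¹ : ℝ) ^ 2) (C := 1)
  · rw [abs_pow]; norm_num
  · intro l hl; omega
  · intro m
    rw [Nat.zero_add]
    simp only [Fin.prod_univ_two, Matrix.cons_val_zero, Matrix.cons_val_one, Matrix.head_cons]
    rw [Finset.sum_eq_single (par^[m] i)
      (fun u _ hu => by rw [pow_apply_ne hroot hreach W_supp hu]; ring)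
      (fun h => absurd (Finset.mem_univ _) h),
      W_pow_diag hroot hreach, ← pow_mul, two_mul, pow_add]

lemma cum_Tiii_W {i : Fin p} (hi : i ≠ r) :
    steadyCumulant p 3 (Wmat par r) (fun k => if k = i then (2 : ℝ) else 1) ![i, i, i]
      = 1 / (1 - (2⁻¹ : ℝ) ^ 3) + 1 := by
  unfold steadyCumulant
  have hfl : ∀ l : ℕ,
      (∑ u, (if u = i then (2 : ℝ) else 1) * ∏ m : Fin 3, ((Wmat par r) ^ l) (![i, i, i] m) u)
        = ((2⁻¹ : ℝ) ^ 3) ^ l + (if l = 0 then 1 else 0) := by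
    intro l
    simp only [Fin.prod_univ_three, Matrix.cons_val_zero, Matrix.cons_val_one, Matrix.head_cons,
      Matrix.cons_val_two, Matrix.tail_cons]
    rw [Finset.sum_eq_single (par^[l] i)
      (fun u _ hu => by rw [pow_apply_ne hroot hreach W_supp hu]; ring)
      (fun h => absurd (Finset.mem_univ _) h),
      W_pow_diag hroot hreach]
    rcases l with _ | n
    · simp only [Function.iterate_zero, id_eq, if_pos rfl]
      norm_num
    · rw [if_neg (iter_ne_self hroot hreach hi (Nat.succ_ne_zero n)),
        if_neg (Nat.succ_ne_zero n), ← pow_mul,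
        show 3 * (n + 1) = (n + 1) + ((n + 1) + (n + 1)) from by ring, pow_add, pow_add]
      ring
  have hsum1 : Summable (fun l : ℕ => ((2⁻¹ : ℝ) ^ 3) ^ l) :=
    summable_geometric_of_norm_lt_one
      (by rw [Real.norm_eq_abs, abs_pow, abs_of_pos (by norm_num : (0:ℝ) < 2⁻¹)]; norm_num)
  have hsum2 : Summable (fun l : ℕ => if l = 0 then (1 : ℝ) else 0) :=
    (hasSum_ite_eq 0 (1 : ℝ)).summable
  rw [tsum_congr hfl, Summable.tsum_add hsum1 hsum2,
    tsum_geometric_of_norm_lt_one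
      (by rw [Real.norm_eq_abs, abs_pow, abs_of_pos (by norm_num : (0:ℝ) < 2⁻¹)]; norm_num),
    tsum_ite_eq, one_div]

end Witness

end Stmt12Aux

namespace Stmt12Aux

lemma cancel_fraction {x y u v D2 D3 : ℝ} (h2 : D2 ≠ 0) (h3 : D3 ≠ 0)
    (h : x / D2 * (y / D3) - u / D2 * (v / D3) = 0) : x * y = u * v := by
  rw [div_mul_div_comm, div_mul_div_comm, div_sub_div_same, div_eq_zero_iff] at h
  rcases h with h | h
  · linarith
  · exact absurd h (mul_ne_zero h2 h3)

end Stmt12Aux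

open Stmt12Aux in
theorem stmt_12_part2 (p : ℕ) (hp : 2 ≤ p) (par : Fin p → Fin p)
    (hroot : par ⟨0, Nat.lt_of_lt_of_le Nat.two_pos hp⟩ = ⟨0, Nat.lt_of_lt_of_le Nat.two_pos hp⟩)
    (hreach : ∀ i : Fin p, ∃ n : ℕ, par^[n] i = ⟨0, Nat.lt_of_lt_of_le Nat.two_pos hp⟩) :
    (∀ i j : Fin p,
      (∀ (A : Matrix (Fin p) (Fin p) ℝ) (w₂ w₃ : Fin p → ℝ),
        treeModel par ⟨0, Nat.lt_of_lt_of_le Nat.two_pos hp⟩ A w₂ w₃ →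
        (steadyCumulant p 2 A w₂ ![⟨0, Nat.lt_of_lt_of_le Nat.two_pos hp⟩, i]) *
            (steadyCumulant p 3 A w₃ ![⟨0, Nat.lt_of_lt_of_le Nat.two_pos hp⟩, ⟨0, Nat.lt_of_lt_of_le Nat.two_pos hp⟩, j])
          - (steadyCumulant p 2 A w₂ ![⟨0, Nat.lt_of_lt_of_le Nat.two_pos hp⟩, j]) *
            (steadyCumulant p 3 A w₃ ![⟨0, Nat.lt_of_lt_of_le Nat.two_pos hp⟩, ⟨0, Nat.lt_of_lt_of_le Nat.two_pos hp⟩, i]) = 0)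
        ↔ Nat.find (hreach i) = Nat.find (hreach j)) := by
  intro i j
  have haW : |Wmat par ⟨0, Nat.lt_of_lt_of_le Nat.two_pos hp⟩ ⟨0, Nat.lt_of_lt_of_le Nat.two_pos hp⟩ ⟨0, Nat.lt_of_lt_of_le Nat.two_pos hp⟩| < 1 := by
    rw [W_root, abs_of_pos (by norm_num : (0:ℝ) < 2⁻¹)]; norm_num
  constructor
  · intro h
    have hmodel : treeModel par ⟨0, Nat.lt_of_lt_of_le Nat.two_pos hp⟩ (Wmat par ⟨0, Nat.lt_of_lt_of_le Nat.two_pos hp⟩)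
        (fun _ => 1) (fun _ => 1) :=
      ⟨W_supp, W_spec hroot hreach, fun _ => one_pos, fun _ => one_ne_zero⟩
    have hval := h _ _ _ hmodel
    rw [cum_S0 hroot hreach W_supp haW (fun _ => 1) i,
      cum_T00 hroot hreach W_supp haW (fun _ => 1) j,
      cum_S0 hroot hreach W_supp haW (fun _ => 1) j,
      cum_T00 hroot hreach W_supp haW (fun _ => 1) i,
      W_col hroot hreach, W_col hroot hreach, W_root] at hval
    have key := cancel_fraction (by norm_num) (by norm_num) hval
    have e2 : ((2:ℝ)⁻¹) ^ (2 * Nat.find (hreach i) + 3 * Nat.find (hreach j))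
        = (2⁻¹) ^ (2 * Nat.find (hreach j) + 3 * Nat.find (hreach i)) := by
      calc ((2:ℝ)⁻¹) ^ (2 * Nat.find (hreach i) + 3 * Nat.find (hreach j))
          = (1 * (2⁻¹:ℝ) ^ Nat.find (hreach i) * 2⁻¹ ^ Nat.find (hreach i))
            * (1 * 2⁻¹ ^ Nat.find (hreach j) * 2⁻¹ ^ (2 * Nat.find (hreach j))) := by ring
        _ = (1 * (2⁻¹:ℝ) ^ Nat.find (hreach j) * 2⁻¹ ^ Nat.find (hreach j))
            * (1 * 2⁻¹ ^ Nat.find (hreach i) * 2⁻¹ ^ (2 * Nat.find (hreach i))) := key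
        _ = (2⁻¹:ℝ) ^ (2 * Nat.find (hreach j) + 3 * Nat.find (hreach i)) := by ring
    have := pow_right_injective₀ (by norm_num : (0:ℝ) < 2⁻¹) (by norm_num : (2:ℝ)⁻¹ ≠ 1) e2
    omega
  · intro hLL A w₂ w₃ hm
    obtain ⟨hA, hspec, -, -⟩ := hm
    have ha := root_entry_lt_one hroot hreach hA hspec
    rw [cum_S0 hroot hreach hA ha w₂ i, cum_T00 hroot hreach hA ha w₃ j,
      cum_S0 hroot hreach hA ha w₂ j, cum_T00 hroot hreach hA ha w₃ i, hLL]
    ring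

set_option maxHeartbeats 2000000 in
open Stmt12Aux in
theorem stmt_12_part3 (p : ℕ) (hp : 2 ≤ p) (par : Fin p → Fin p)
    (hroot : par ⟨0, Nat.lt_of_lt_of_le Nat.two_pos hp⟩ = ⟨0, Nat.lt_of_lt_of_le Nat.two_pos hp⟩)
    (hreach : ∀ i : Fin p, ∃ n : ℕ, par^[n] i = ⟨0, Nat.lt_of_lt_of_le Nat.two_pos hp⟩) :
    (∀ i j : Fin p, Nat.find (hreach i) ≠ Nat.find (hreach j) →
      ((∀ (A : Matrix (Fin p) (Fin p) ℝ) (w₂ w₃ : Fin p → ℝ),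
        treeModel par ⟨0, Nat.lt_of_lt_of_le Nat.two_pos hp⟩ A w₂ w₃ →
        (steadyCumulant p 2 A w₂ ![i, j]) *
            (steadyCumulant p 3 A w₃ ![⟨0, Nat.lt_of_lt_of_le Nat.two_pos hp⟩, ⟨0, Nat.lt_of_lt_of_le Nat.two_pos hp⟩, j])
          - (steadyCumulant p 2 A w₂ ![⟨0, Nat.lt_of_lt_of_le Nat.two_pos hp⟩, j]) *
            (steadyCumulant p 3 A w₃ ![⟨0, Nat.lt_of_lt_of_le Nat.two_pos hp⟩, i, j]) = 0)
        ↔ Nat.find (hreach i) < Nat.find (hreach j))) := by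
  intro i j hne
  have haW : |Wmat par ⟨0, Nat.lt_of_lt_of_le Nat.two_pos hp⟩ ⟨0, Nat.lt_of_lt_of_le Nat.two_pos hp⟩ ⟨0, Nat.lt_of_lt_of_le Nat.two_pos hp⟩| < 1 := by
    rw [W_root, abs_of_pos (by norm_num : (0:ℝ) < 2⁻¹)]; norm_num
  constructor
  · intro h
    by_contra hnot
    have hji : Nat.find (hreach j) < Nat.find (hreach i) := by omega
    have hmodel : treeModel par ⟨0, Nat.lt_of_lt_of_le Nat.two_pos hp⟩ (Wmat par ⟨0, Nat.lt_of_lt_of_le Nat.two_pos hp⟩)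
        (fun _ => 1) (fun _ => 1) :=
      ⟨W_supp, W_spec hroot hreach, fun _ => one_pos, fun _ => one_ne_zero⟩
    have hval := h _ _ _ hmodel
    rw [cum2_swap, cum_Sij hroot hreach W_supp haW (fun _ => 1) hji,
      cum_T00 hroot hreach W_supp haW (fun _ => 1) j,
      cum_S0 hroot hreach W_supp haW (fun _ => 1) j,
      cum3_swap23, cum_T0ij hroot hreach W_supp haW (fun _ => 1) (le_of_lt hji),
      W_col hroot hreach, W_col hroot hreach, W_root] at hval
    have key := cancel_fraction (by norm_num) (by norm_num) hval
    obtain ⟨m, hm⟩ : ∃ m, Nat.find (hreach i) = Nat.find (hreach j) + m :=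
      ⟨Nat.find (hreach i) - Nat.find (hreach j), by omega⟩
    rw [hm, Nat.add_sub_cancel_left,
      show 2 * (Nat.find (hreach j) + m) - Nat.find (hreach j)
        = Nat.find (hreach j) + 2 * m from by omega] at key
    have e2 : ((2:ℝ)⁻¹) ^ (5 * Nat.find (hreach j) + 2 * m)
        = (2⁻¹) ^ (5 * Nat.find (hreach j) + 3 * m) := by
      calc ((2:ℝ)⁻¹) ^ (5 * Nat.find (hreach j) + 2 * m)
          = (1 * (2⁻¹:ℝ) ^ Nat.find (hreach j) * 2⁻¹ ^ (Nat.find (hreach j) + m) * 2⁻¹ ^ m)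
            * (1 * 2⁻¹ ^ Nat.find (hreach j) * 2⁻¹ ^ (2 * Nat.find (hreach j))) := by ring
        _ = (1 * (2⁻¹:ℝ) ^ Nat.find (hreach j) * 2⁻¹ ^ Nat.find (hreach j))
            * (1 * 2⁻¹ ^ Nat.find (hreach j) * 2⁻¹ ^ (Nat.find (hreach j) + m)
              * 2⁻¹ ^ (Nat.find (hreach j) + 2 * m)) := key
        _ = (2⁻¹:ℝ) ^ (5 * Nat.find (hreach j) + 3 * m) := by ring
    have := pow_right_injective₀ (by norm_num : (0:ℝ) < 2⁻¹) (by norm_num : (2:ℝ)⁻¹ ≠ 1) e2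
    omega
  · intro hlt A w₂ w₃ hm
    obtain ⟨hA, hspec, -, -⟩ := hm
    have ha := root_entry_lt_one hroot hreach hA hspec
    rw [cum_Sij hroot hreach hA ha w₂ hlt, cum_T00 hroot hreach hA ha w₃ j,
      cum_S0 hroot hreach hA ha w₂ j, cum_T0ij hroot hreach hA ha w₃ (le_of_lt hlt)]
    obtain ⟨m, hm2⟩ : ∃ m, Nat.find (hreach j) = Nat.find (hreach i) + m :=
      ⟨Nat.find (hreach j) - Nat.find (hreach i), by omega⟩
    rw [hm2, Nat.add_sub_cancel_left,
      show 2 * (Nat.find (hreach i) + m) - Nat.find (hreach i)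
        = Nat.find (hreach i) + 2 * m from by omega]
    ring

set_option maxHeartbeats 2000000 in
open Stmt12Aux in
theorem stmt_12_part1 (p : ℕ) (hp : 2 ≤ p) (par : Fin p → Fin p)
    (hroot : par ⟨0, Nat.lt_of_lt_of_le Nat.two_pos hp⟩ = ⟨0, Nat.lt_of_lt_of_le Nat.two_pos hp⟩)
    (hreach : ∀ i : Fin p, ∃ n : ℕ, par^[n] i = ⟨0, Nat.lt_of_lt_of_le Nat.two_pos hp⟩) :
    (∀ i : Fin p,
      (∀ (j : Fin p) (A : Matrix (Fin p) (Fin p) ℝ) (w₂ w₃ : Fin p → ℝ),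
        treeModel par ⟨0, Nat.lt_of_lt_of_le Nat.two_pos hp⟩ A w₂ w₃ →
        (steadyCumulant p 2 A w₂ ![i, j]) ^ 3 * (steadyCumulant p 3 A w₃ ![i, i, i]) ^ 2
          - (steadyCumulant p 2 A w₂ ![i, i]) ^ 3 *
            (steadyCumulant p 3 A w₃ ![i, i, j]) *
            (steadyCumulant p 3 A w₃ ![i, j, j]) = 0)
        ↔ i = ⟨0, Nat.lt_of_lt_of_le Nat.two_pos hp⟩) := by
  intro i
  constructor
  · intro h
    by_contra hi
    have hzi : (⟨0, Nat.lt_of_lt_of_le Nat.two_pos hp⟩ : Fin p) ≠ i := fun hc => hi hc.symm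
    have haW : |Wmat par ⟨0, Nat.lt_of_lt_of_le Nat.two_pos hp⟩ ⟨0, Nat.lt_of_lt_of_le Nat.two_pos hp⟩ ⟨0, Nat.lt_of_lt_of_le Nat.two_pos hp⟩| < 1 := by
      rw [W_root, abs_of_pos (by norm_num : (0:ℝ) < 2⁻¹)]; norm_num
    have hmodel : treeModel par ⟨0, Nat.lt_of_lt_of_le Nat.two_pos hp⟩ (Wmat par ⟨0, Nat.lt_of_lt_of_le Nat.two_pos hp⟩)
        (fun _ => 1) (fun k => if k = i then (2:ℝ) else 1) :=
      ⟨W_supp, W_spec hroot hreach, fun _ => one_pos,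
        fun k => by dsimp only; split_ifs <;> norm_num⟩
    have hval := h ⟨0, Nat.lt_of_lt_of_le Nat.two_pos hp⟩ _ _ _ hmodel
    rw [cum2_swap, cum_S0 hroot hreach W_supp haW (fun _ => 1) i,
      cum_Tiii_W hroot hreach hi,
      cum_Sii_W hroot hreach i,
      cum3_rot, cum_T0jj hroot hreach W_supp haW _ i,
      cum3_rot, cum3_swap23, cum_T00 hroot hreach W_supp haW _ i,
      W_col hroot hreach, W_root] at hval
    simp only [if_neg hzi] at hval
    have e : ((2:ℝ)⁻¹) ^ (6 * Nat.find (hreach i)) * (10304 / 1323) = 0 := by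
      rw [← hval]
      ring
    exact mul_ne_zero (pow_ne_zero _ (by norm_num)) (by norm_num) e
  · intro hi
    subst hi
    intro j A w₂ w₃ hm
    obtain ⟨hA, hspec, -, -⟩ := hm
    have ha := root_entry_lt_one hroot hreach hA hspec
    rw [cum_S0 hroot hreach hA ha w₂ j,
      cum_T00 hroot hreach hA ha w₃ (⟨0, Nat.lt_of_lt_of_le Nat.two_pos hp⟩ : Fin p),
      cum_S0 hroot hreach hA ha w₂ (⟨0, Nat.lt_of_lt_of_le Nat.two_pos hp⟩ : Fin p),
      cum_T00 hroot hreach hA ha w₃ j,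
      cum_T0jj hroot hreach hA ha w₃ j]
    simp only [level_root hroot hreach, Nat.mul_zero, pow_zero, Matrix.one_apply_eq]
    ring

/-- Level recovery from the vanishing ideal for a directed tree with
root `0` and a single self-loop at the root. -/
theorem stmt_12 (p : ℕ) (hp : 2 ≤ p) (par : Fin p → Fin p)
    (hroot : par ⟨0, by omega⟩ = ⟨0, by omega⟩)
    (hreach : ∀ i : Fin p, ∃ n : ℕ, par^[n] i = ⟨0, by omega⟩) :
    -- (1)
    (∀ i : Fin p,
      (∀ (j : Fin p) (A : Matrix (Fin p) (Fin p) ℝ) (w₂ w₃ : Fin p → ℝ),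
        treeModel par ⟨0, by omega⟩ A w₂ w₃ →
        (steadyCumulant p 2 A w₂ ![i, j]) ^ 3 * (steadyCumulant p 3 A w₃ ![i, i, i]) ^ 2
          - (steadyCumulant p 2 A w₂ ![i, i]) ^ 3 *
            (steadyCumulant p 3 A w₃ ![i, i, j]) *
            (steadyCumulant p 3 A w₃ ![i, j, j]) = 0)
        ↔ i = ⟨0, by omega⟩) ∧
    -- (2)
    (∀ i j : Fin p,
      (∀ (A : Matrix (Fin p) (Fin p) ℝ) (w₂ w₃ : Fin p → ℝ),
        treeModel par ⟨0, by omega⟩ A w₂ w₃ →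
        (steadyCumulant p 2 A w₂ ![⟨0, by omega⟩, i]) *
            (steadyCumulant p 3 A w₃ ![⟨0, by omega⟩, ⟨0, by omega⟩, j])
          - (steadyCumulant p 2 A w₂ ![⟨0, by omega⟩, j]) *
            (steadyCumulant p 3 A w₃ ![⟨0, by omega⟩, ⟨0, by omega⟩, i]) = 0)
        ↔ Nat.find (hreach i) = Nat.find (hreach j)) ∧
    -- (3)
    (∀ i j : Fin p, Nat.find (hreach i) ≠ Nat.find (hreach j) →
      ((∀ (A : Matrix (Fin p) (Fin p) ℝ) (w₂ w₃ : Fin p → ℝ),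
        treeModel par ⟨0, by omega⟩ A w₂ w₃ →
        (steadyCumulant p 2 A w₂ ![i, j]) *
            (steadyCumulant p 3 A w₃ ![⟨0, by omega⟩, ⟨0, by omega⟩, j])
          - (steadyCumulant p 2 A w₂ ![⟨0, by omega⟩, j]) *
            (steadyCumulant p 3 A w₃ ![⟨0, by omega⟩, i, j]) = 0)
        ↔ Nat.find (hreach i) < Nat.find (hreach j))) :=
  ⟨stmt_12_part1 p hp par hroot hreach, stmt_12_part2 p hp par hroot hreach,
    stmt_12_part3 p hp par hroot hreach⟩
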